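/- Let n ∈ ℕ^r be a multi-index near the diagonal, let A_1, …, A_r be real polynomials with deg A_j ≤ n_j − 1, and set F(x) = Σ_{j=1}^r A_j(x) w_j(x). If F satisfies the type I orthogonality conditions ∫₀¹ F(x) x^k dx = 0 for k = 0, 1, …, |n| − 2, then there exists a constant c ∈ ℝ such that for every real s > 1, ∫₀¹ F(x) x^{s−1} dx = c · (Γ(s+a)/Γ(s+b+n)) · (1−s)_{|n|−1}. -/

import Mathlib

open MeasureTheory Finset

open Polynomial Filter

section AuxLemmas


lemma aux_poch_prod (N : ℕ) (x : ℝ) :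
    (ascPochhammer ℝ N).eval x = ∏ m ∈ Finset.range N, (x + m) := by
  induction N with
  | zero => simp
  | succ k ih => rw [ascPochhammer_succ_eval, ih, Finset.prod_range_succ]

lemma aux_gamma_shift (x : ℝ) (hx : 0 < x) (k : ℕ) :
    Real.Gamma (x + k) = Real.Gamma x * (ascPochhammer ℝ k).eval x := by
  induction k with
  | zero => simp
  | succ m ih =>
    have hxm : x + m ≠ 0 := by positivity
    have : x + (m + 1 : ℕ) = (x + m) + 1 := by push_cast; ring
    rw [this, Real.Gamma_add_one hxm, ih, ascPochhammer_succ_eval]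
    ring

lemma aux_factor (N : ℕ) (Q : Polynomial ℝ) (hdeg : Q.degree < (N : WithBot ℕ))
    (hroots : ∀ k : ℕ, k + 2 ≤ N → Q.eval ((k : ℝ) + 1) = 0) :
    ∃ c : ℝ, ∀ s : ℝ, Q.eval s = c * (ascPochhammer ℝ (N - 1)).eval (1 - s) := by
  rcases eq_or_ne Q 0 with h | h
  · exact ⟨0, fun s => by simp [h]⟩
  have hmul : ∀ (f : ℕ → ℝ) (k : ℕ),
      (Multiset.map f (Multiset.range k)).prod = ∏ m ∈ Finset.range k, f m := by
    intro f k; rw [Finset.prod_eq_multiset_prod, Finset.range_val]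
  have hN : 1 ≤ N := by
    rcases Nat.eq_zero_or_pos N with rfl | h1
    · exact absurd (Polynomial.degree_eq_bot.mp
        (Nat.WithBot.lt_zero_iff.mp (by exact_mod_cast hdeg))) h
    · exact h1
  set S : Multiset ℝ := (Multiset.range (N - 1)).map (fun m : ℕ => (m : ℝ) + 1) with hS
  have hSsub : S ≤ Q.roots := by
    refine Multiset.le_iff_subset ?_ |>.mpr ?_
    · refine Multiset.Nodup.map ?_ (Multiset.nodup_range _)
      intro x y hxy
      have : (x : ℝ) = y := by simpa using hxy
      exact_mod_cast this
    · intro x hx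
      rw [hS] at hx
      obtain ⟨m, hm, rfl⟩ := Multiset.mem_map.mp hx
      rw [Multiset.mem_range] at hm
      rw [Polynomial.mem_roots h]
      exact hroots m (by omega)
  obtain ⟨R, hR⟩ := (Multiset.prod_X_sub_C_dvd_iff_le_roots h S).mpr hSsub
  have hScard : Multiset.card S = N - 1 := by simp [hS]
  have hD : ((S.map fun a => X - C a).prod).natDegree = N - 1 := by
    rw [natDegree_multiset_prod_X_sub_C_eq_card, hScard]
  have hDmonic : ((S.map fun a => X - C a).prod).Monic :=
    monic_multiset_prod_of_monic _ _ fun a _ => monic_X_sub_C a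
  have hR0 : R ≠ 0 := by rintro rfl; rw [mul_zero] at hR; exact h hR
  have hQdeg : Q.natDegree ≤ N - 1 := by
    have := (Polynomial.natDegree_lt_iff_degree_lt h).mpr (by exact_mod_cast hdeg)
    omega
  have hRdeg : R.natDegree = 0 := by
    have := hDmonic.natDegree_mul' (q := R)
      (by simpa [hDmonic.leadingCoeff] using Polynomial.leadingCoeff_ne_zero.mpr hR0)
    rw [← hR] at this; omega
  obtain ⟨c0, rfl⟩ := Polynomial.natDegree_eq_zero.mp hRdeg
  refine ⟨c0 * (-1) ^ (N - 1), fun s => ?_⟩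
  have hDeval : ((S.map fun a => X - C a).prod).eval s
      = ∏ m ∈ Finset.range (N - 1), (s - ((m : ℝ) + 1)) := by
    rw [Polynomial.eval_multiset_prod, hS, Multiset.map_map, Multiset.map_map, hmul]
    simp [Function.comp]
  have hpoch : (ascPochhammer ℝ (N - 1)).eval (1 - s)
      = ∏ m ∈ Finset.range (N - 1), ((1 - s) + m) := aux_poch_prod _ _
  have hfac : ∀ m : ℕ, s - ((m : ℝ) + 1) = (-1) * ((1 - s) + m) := fun m => by ring
  rw [hR, Polynomial.eval_mul, hDeval, Polynomial.eval_C, hpoch,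
    Finset.prod_congr rfl fun m _ => hfac m, Finset.prod_mul_distrib]
  simp
  ring


lemma aux_meas (u : ℝ → ℝ) (hu : ContinuousOn u (Set.Ioo 0 1)) (σ : ℝ) :
    AEStronglyMeasurable (fun x : ℝ => x ^ (σ - 1) * u x)
      (volume.restrict (Set.Ioo (0:ℝ) 1)) := by
  refine ContinuousOn.aestronglyMeasurable (ContinuousOn.mul ?_ hu) measurableSet_Ioo
  intro x hx
  exact (Real.continuousAt_rpow_const x _ (Or.inl (ne_of_gt hx.1))).continuousWithinAt

lemma aux_integrable (u : ℝ → ℝ) (hu : ContinuousOn u (Set.Ioo 0 1))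
    (σ : ℝ) (hσ : 0 < σ)
    (hi : IntegrableOn (fun x : ℝ => x ^ (σ - 1) * |u x|) (Set.Ioo 0 1)) :
    IntegrableOn (fun x : ℝ => x ^ (σ - 1) * u x) (Set.Ioo 0 1) := by
  refine Integrable.mono' hi (aux_meas u hu σ) ?_
  filter_upwards [ae_restrict_mem measurableSet_Ioo] with x hx
  have hx0 : (0:ℝ) < x := hx.1
  rw [Real.norm_eq_abs, abs_mul, abs_of_nonneg (Real.rpow_nonneg hx0.le _)]

lemma aux_gamma_cont {x : ℝ} (hx : 0 < x) : ContinuousAt Real.Gamma x := by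
  refine (Real.differentiableAt_Gamma fun m => ?_).continuousAt
  have : -(m:ℝ) ≤ 0 := neg_nonpos.mpr (Nat.cast_nonneg m)
  exact ne_of_gt (lt_of_le_of_lt this hx)

noncomputable def auxq : ℕ → ℝ := fun n => 1 + ((n : ℝ) + 1)⁻¹

lemma aux_mellin_ext (r : ℕ) (a b : Fin r → ℝ)
    (ha : ∀ i, -1 < a i) (hb : ∀ i, -1 < b i)
    (w : Fin r → ℝ → ℝ)
    (hw_cont : ∀ j, ContinuousOn (w j) (Set.Ioo 0 1))
    (hw_int : ∀ j, ∀ σ : ℝ, 0 < σ →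
      IntegrableOn (fun x : ℝ => x ^ (σ - 1) * |w j x|) (Set.Ioo 0 1))
    (hw_mellin : ∀ j, ∀ s : ℝ, 1 < s →
      ∫ x in Set.Ioo (0:ℝ) 1, x ^ (s - 1) * w j x
        = (∏ i, Real.Gamma (s + a i)) /
          (∏ i, Real.Gamma (s + b i + if i = j then 1 else 0)))
    (j : Fin r) (s : ℝ) (hs : 1 ≤ s) :
    ∫ x in Set.Ioo (0:ℝ) 1, x ^ (s - 1) * w j x
      = (∏ i, Real.Gamma (s + a i)) /
        (∏ i, Real.Gamma (s + b i + if i = j then 1 else 0)) := by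
  rcases lt_or_eq_of_le hs with hs1 | rfl
  · exact hw_mellin j s hs1
  -- s = 1 : take a limit along sₙ = 1 + 1/(n+1)
  have hqpos : ∀ n, 1 < auxq n := by
    intro n
    have : (0:ℝ) < ((n:ℝ)+1)⁻¹ := by positivity
    simp [auxq]; linarith
  have hqlim : Tendsto auxq atTop (nhds 1) := by
    have h1 : Tendsto (fun n : ℕ => ((n : ℝ) + 1)⁻¹) atTop (nhds 0) :=
      tendsto_inv_atTop_zero.comp
        (tendsto_atTop_add_const_right _ 1 tendsto_natCast_atTop_atTop)
    have h2 : Tendsto (fun n : ℕ => 1 + ((n : ℝ) + 1)⁻¹) atTop (nhds (1 + 0)) :=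
      (tendsto_const_nhds : Tendsto (fun _ : ℕ => (1:ℝ)) atTop (nhds 1)).add h1
    simp only [add_zero] at h2; exact h2
  -- limit of the integrals
  have hlhs : Tendsto (fun n => ∫ x in Set.Ioo (0:ℝ) 1, x ^ (auxq n - 1) * w j x) atTop
      (nhds (∫ x in Set.Ioo (0:ℝ) 1, x ^ ((1:ℝ) - 1) * w j x)) := by
    refine MeasureTheory.tendsto_integral_of_dominated_convergence
      (fun x => x ^ ((2⁻¹ : ℝ) - 1) * |w j x|)
      (fun n => aux_meas (w j) (hw_cont j) (auxq n)) (hw_int j 2⁻¹ (by norm_num)) ?_ ?_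
    · intro n
      filter_upwards [ae_restrict_mem measurableSet_Ioo] with x hx
      rw [Real.norm_eq_abs, abs_mul, abs_of_nonneg (Real.rpow_nonneg hx.1.le _)]
      have h1 : x ^ (auxq n - 1) ≤ x ^ ((2⁻¹:ℝ) - 1) := by
        apply Real.rpow_le_rpow_of_exponent_ge hx.1 hx.2.le
        have h2 : (2⁻¹:ℝ) ≤ 1 := by norm_num
        linarith [hqpos n]
      exact mul_le_mul_of_nonneg_right h1 (abs_nonneg _)
    · filter_upwards [ae_restrict_mem measurableSet_Ioo] with x hx
      have hcont : ContinuousAt (fun p : ℝ => x ^ p) (1 - 1) :=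
        Real.continuousAt_const_rpow (ne_of_gt hx.1)
      have : Tendsto (fun n => x ^ (auxq n - 1)) atTop (nhds (x ^ ((1:ℝ) - 1))) :=
        hcont.tendsto.comp (hqlim.sub tendsto_const_nhds)
      exact this.mul tendsto_const_nhds
  -- limit of the Gamma ratios
  have hrhs : Tendsto (fun n => (∏ i, Real.Gamma (auxq n + a i)) /
      (∏ i, Real.Gamma (auxq n + b i + if i = j then 1 else 0))) atTop
      (nhds ((∏ i, Real.Gamma ((1:ℝ) + a i)) /
        (∏ i, Real.Gamma ((1:ℝ) + b i + if i = j then 1 else 0)))) := by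
    have hnum : Tendsto (fun n => ∏ i, Real.Gamma (auxq n + a i)) atTop
        (nhds (∏ i, Real.Gamma ((1:ℝ) + a i))) := by
      refine tendsto_finset_prod _ fun i _ => ?_
      exact (aux_gamma_cont (by linarith [ha i])).tendsto.comp
        (hqlim.add tendsto_const_nhds)
    have hden : Tendsto (fun n => ∏ i, Real.Gamma (auxq n + b i + if i = j then 1 else 0))
        atTop (nhds (∏ i, Real.Gamma ((1:ℝ) + b i + if i = j then 1 else 0))) := by
      refine tendsto_finset_prod _ fun i _ => ?_
      have hpos : (0:ℝ) < 1 + b i + if i = j then 1 else 0 := by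
        have := hb i; split <;> linarith
      exact (aux_gamma_cont hpos).tendsto.comp
        ((hqlim.add tendsto_const_nhds).add tendsto_const_nhds)
    refine hnum.div hden ?_
    refine ne_of_gt (Finset.prod_pos fun i _ => Real.Gamma_pos_of_pos ?_)
    have := hb i; split <;> linarith
  have heq : (fun n => ∫ x in Set.Ioo (0:ℝ) 1, x ^ (auxq n - 1) * w j x)
      = fun n => (∏ i, Real.Gamma (auxq n + a i)) /
        (∏ i, Real.Gamma (auxq n + b i + if i = j then 1 else 0)) := by
    funext n; exact hw_mellin j (auxq n) (hqpos n)
  rw [heq] at hlhs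
  exact tendsto_nhds_unique hlhs hrhs

lemma aux_poch_pos {x : ℝ} (hx : 0 < x) (k : ℕ) : 0 < (ascPochhammer ℝ k).eval x := by
  rw [aux_poch_prod]
  exact Finset.prod_pos fun m _ => by positivity


end AuxLemmas

/-- In the Jacobi-like setting, the Mellin transform of a type I function
(a polynomial combination of the weights satisfying the type I orthogonality conditions)
equals `c · Γ(s+a)/Γ(s+b+n) · (1-s)_{|n|-1}` for some constant `c`. -/
theorem stmt_3
    (r : ℕ) (hr : 1 ≤ r)
    (a b : Fin r → ℝ)
    (ha : ∀ i, -1 < a i) (hb : ∀ i, -1 < b i) (hab : ∀ i, a i < b i)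
    (w : Fin r → ℝ → ℝ)
    (hw_cont : ∀ j, ContinuousOn (w j) (Set.Ioo 0 1))
    (hw_int : ∀ j, ∀ σ : ℝ, 0 < σ →
      IntegrableOn (fun x : ℝ => x ^ (σ - 1) * |w j x|) (Set.Ioo 0 1))
    (hw_mellin : ∀ j, ∀ s : ℝ, 1 < s →
      ∫ x in Set.Ioo (0:ℝ) 1, x ^ (s - 1) * w j x
        = (∏ i, Real.Gamma (s + a i)) /
          (∏ i, Real.Gamma (s + b i + if i = j then 1 else 0)))
    (n : Fin r → ℕ)
    (hn : ∀ i j, |(n i : ℤ) - (n j : ℤ)| ≤ 1)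
    (A : Fin r → Polynomial ℝ)
    (hA : ∀ j, (A j).degree < (n j : WithBot ℕ))
    (horth : ∀ k : ℕ, k + 2 ≤ ∑ j, n j →
      ∫ x in Set.Ioo (0:ℝ) 1, (∑ j, (A j).eval x * w j x) * x ^ (k : ℕ) = 0) :
    ∃ c : ℝ, ∀ s : ℝ, 1 < s →
      ∫ x in Set.Ioo (0:ℝ) 1, (∑ j, (A j).eval x * w j x) * x ^ (s - 1)
        = c * ((∏ i, Real.Gamma (s + a i)) / (∏ i, Real.Gamma (s + b i + n i))) *
            (ascPochhammer ℝ (∑ j, n j - 1)).eval (1 - s) := by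
  classical
  set N := ∑ j, n j with hN
  have hAeval : ∀ j (x : ℝ),
      (A j).eval x = ∑ k ∈ Finset.range (n j), (A j).coeff k * x ^ k := by
    intro j x
    rcases eq_or_ne (A j) 0 with h0 | h0
    · simp [h0]
    · exact Polynomial.eval_eq_sum_range'
        ((Polynomial.natDegree_lt_iff_degree_lt h0).mpr (hA j)) x
  have hδ : ∀ j : Fin r, ∀ k < n j, ∀ i, k + (if i = j then 1 else 0) ≤ n i := by
    intro j k hk i
    have h := hn i j
    rw [abs_le] at h
    by_cases hij : i = j <;> simp [hij] <;> omega
  have hm := aux_mellin_ext r a b ha hb w hw_cont hw_int hw_mellin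
  -- Step 1 : the Mellin transform as a finite sum of Gamma ratios
  have key : ∀ s : ℝ, 1 ≤ s →
      ∫ x in Set.Ioo (0:ℝ) 1, (∑ j, (A j).eval x * w j x) * x ^ (s - 1)
        = ∑ j, ∑ k ∈ Finset.range (n j), (A j).coeff k *
            ((∏ i, Real.Gamma (s + k + a i)) /
             (∏ i, Real.Gamma (s + k + b i + if i = j then 1 else 0))) := by
    intro s hs
    have hint : ∀ (j : Fin r) (k : ℕ), IntegrableOn
        (fun x : ℝ => (A j).coeff k * (x ^ (s + k - 1) * w j x)) (Set.Ioo 0 1) := by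
      intro j k
      have h1 : (0:ℝ) < s + k := by
        have : (0:ℝ) ≤ k := Nat.cast_nonneg k
        linarith
      exact (aux_integrable (w j) (hw_cont j) (s + k) h1 (hw_int j _ h1)).const_mul _
    have step1 : ∫ x in Set.Ioo (0:ℝ) 1, (∑ j, (A j).eval x * w j x) * x ^ (s - 1)
        = ∫ x in Set.Ioo (0:ℝ) 1,
            ∑ j, ∑ k ∈ Finset.range (n j), (A j).coeff k * (x ^ (s + k - 1) * w j x) := by
      refine setIntegral_congr_fun measurableSet_Ioo fun x hx => ?_
      rw [Finset.sum_mul]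
      refine Finset.sum_congr rfl fun j _ => ?_
      rw [hAeval j x, Finset.sum_mul, Finset.sum_mul]
      refine Finset.sum_congr rfl fun k hk => ?_
      have hx0 : (0:ℝ) < x := hx.1
      have hpow : (x : ℝ) ^ k * x ^ (s - 1) = x ^ (s + k - 1) := by
        rw [← Real.rpow_natCast x k, ← Real.rpow_add hx0]
        ring_nf
      rw [mul_assoc, mul_assoc]
      congr 1
      rw [← hpow]
      ring
    rw [step1,
      MeasureTheory.integral_finset_sum _
        (fun j _ => integrable_finset_sum _ fun k _ => hint j k)]
    refine Finset.sum_congr rfl fun j _ => ?_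
    rw [MeasureTheory.integral_finset_sum _ fun k _ => hint j k]
    refine Finset.sum_congr rfl fun k hk => ?_
    rw [MeasureTheory.integral_const_mul]
    have h1 : (1:ℝ) ≤ s + k := by
      have : (0:ℝ) ≤ k := Nat.cast_nonneg k
      linarith
    rw [hm j (s + k) h1]
  -- Step 2 : the polynomial Q
  set Q : Polynomial ℝ := ∑ j, ∑ k ∈ Finset.range (n j), Polynomial.C ((A j).coeff k) *
      ((∏ i, (ascPochhammer ℝ k).comp (Polynomial.X + Polynomial.C (a i))) *
       (∏ i, (ascPochhammer ℝ (n i - (k + if i = j then 1 else 0))).comp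
          (Polynomial.X + Polynomial.C ((k : ℝ) + b i + if i = j then 1 else 0)))) with hQ
  have hQeval : ∀ s : ℝ, Q.eval s = ∑ j, ∑ k ∈ Finset.range (n j), (A j).coeff k *
      ((∏ i, (ascPochhammer ℝ k).eval (s + a i)) *
       (∏ i, (ascPochhammer ℝ (n i - (k + if i = j then 1 else 0))).eval
          (s + ((k : ℝ) + b i + if i = j then 1 else 0)))) := by
    intro s
    rw [hQ, Polynomial.eval_finset_sum]
    refine Finset.sum_congr rfl fun j _ => ?_
    rw [Polynomial.eval_finset_sum]
    refine Finset.sum_congr rfl fun k _ => ?_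
    simp only [Polynomial.eval_mul, Polynomial.eval_C, Polynomial.eval_prod,
      Polynomial.eval_comp, Polynomial.eval_add, Polynomial.eval_X]
  -- Step 3 : Gamma ratio identity
  have hGQ : ∀ s : ℝ, 1 ≤ s →
      (∏ i, Real.Gamma (s + a i)) / (∏ i, Real.Gamma (s + b i + n i)) * Q.eval s
        = ∑ j, ∑ k ∈ Finset.range (n j), (A j).coeff k *
            ((∏ i, Real.Gamma (s + k + a i)) /
             (∏ i, Real.Gamma (s + k + b i + if i = j then 1 else 0))) := by
    intro s hs
    rw [hQeval, Finset.mul_sum]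
    refine Finset.sum_congr rfl fun j _ => ?_
    rw [Finset.mul_sum]
    refine Finset.sum_congr rfl fun k hk => ?_
    rw [Finset.mem_range] at hk
    have e1 : (∏ i, Real.Gamma (s + k + a i))
        = (∏ i, Real.Gamma (s + a i)) * (∏ i, (ascPochhammer ℝ k).eval (s + a i)) := by
      rw [← Finset.prod_mul_distrib]
      refine Finset.prod_congr rfl fun i _ => ?_
      have h0 : 0 < s + a i := by have := ha i; linarith
      have harg : s + k + a i = (s + a i) + k := by ring
      rw [harg, aux_gamma_shift _ h0 k]
    have e2 : (∏ i, Real.Gamma (s + b i + n i))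
        = (∏ i, Real.Gamma (s + k + b i + if i = j then 1 else 0)) *
          (∏ i, (ascPochhammer ℝ (n i - (k + if i = j then 1 else 0))).eval
            (s + ((k : ℝ) + b i + if i = j then 1 else 0))) := by
      rw [← Finset.prod_mul_distrib]
      refine Finset.prod_congr rfl fun i _ => ?_
      have hle := hδ j k hk i
      have h0 : 0 < s + ((k : ℝ) + b i + if i = j then 1 else 0) := by
        have h1 := hb i
        have h2 : (0:ℝ) ≤ k := Nat.cast_nonneg k
        split <;> linarith
      have harg : s + b i + n i
          = (s + ((k : ℝ) + b i + if i = j then 1 else 0))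
            + ((n i - (k + if i = j then 1 else 0) : ℕ) : ℝ) := by
        rw [Nat.cast_sub hle]
        by_cases hij : i = j <;> simp [hij] <;> push_cast <;> ring
      rw [harg, aux_gamma_shift _ h0]
      have hre : s + ((k : ℝ) + b i + if i = j then 1 else 0)
          = s + (k : ℝ) + b i + if i = j then 1 else 0 := by ring
      rw [hre]
    have hB0 : 0 < ∏ i, Real.Gamma (s + k + b i + if i = j then 1 else 0) := by
      refine Finset.prod_pos fun i _ => Real.Gamma_pos_of_pos ?_
      have h1 := hb i
      have h2 : (0:ℝ) ≤ k := Nat.cast_nonneg k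
      split <;> linarith
    have hPB : 0 < ∏ i, (ascPochhammer ℝ (n i - (k + if i = j then 1 else 0))).eval
        (s + ((k : ℝ) + b i + if i = j then 1 else 0)) := by
      refine Finset.prod_pos fun i _ => aux_poch_pos ?_ _
      have h1 := hb i
      have h2 : (0:ℝ) ≤ k := Nat.cast_nonneg k
      split <;> linarith
    rw [e1, e2]
    field_simp
  -- Step 4 : roots of Q
  have hQroot : ∀ k : ℕ, k + 2 ≤ N → Q.eval ((k : ℝ) + 1) = 0 := by
    intro k hk
    have h1 : (1:ℝ) ≤ (k : ℝ) + 1 := by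
      have : (0:ℝ) ≤ k := Nat.cast_nonneg k
      linarith
    have h2 := key ((k : ℝ) + 1) h1
    have h3 : ∫ x in Set.Ioo (0:ℝ) 1, (∑ j, (A j).eval x * w j x) * x ^ (((k : ℝ) + 1) - 1)
        = ∫ x in Set.Ioo (0:ℝ) 1, (∑ j, (A j).eval x * w j x) * x ^ (k : ℕ) := by
      refine setIntegral_congr_fun measurableSet_Ioo fun x hx => ?_
      congr 1
      rw [show ((k:ℝ) + 1) - 1 = (k : ℝ) by ring, Real.rpow_natCast]
    have h5 := hGQ ((k : ℝ) + 1) h1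
    rw [← h2, h3, horth k hk] at h5
    have hrpos : 0 < (∏ i, Real.Gamma ((k:ℝ) + 1 + a i)) /
        (∏ i, Real.Gamma ((k:ℝ) + 1 + b i + n i)) := by
      refine div_pos (Finset.prod_pos fun i _ => Real.Gamma_pos_of_pos ?_)
        (Finset.prod_pos fun i _ => Real.Gamma_pos_of_pos ?_)
      · have := ha i; have : (0:ℝ) ≤ k := Nat.cast_nonneg k; have := ha i; linarith
      · have h1' := hb i
        have h2' : (0:ℝ) ≤ k := Nat.cast_nonneg k
        have h3' : (0:ℝ) ≤ n i := Nat.cast_nonneg _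
        linarith
    exact (mul_eq_zero.mp h5).resolve_left (ne_of_gt hrpos)
  -- Step 5 : degree of Q
  have hQdeg : Q.degree < (N : WithBot ℕ) := by
    rcases Nat.eq_zero_or_pos N with h0 | hpos
    · have hnj : ∀ j, n j = 0 := by
        intro j
        have hs0 : ∑ j, n j = 0 := by omega
        exact Finset.sum_eq_zero_iff.mp hs0 j (Finset.mem_univ j)
      have : Q = 0 := by
        rw [hQ]
        refine Finset.sum_eq_zero fun j _ => ?_
        rw [hnj j]
        simp
      rw [this, Polynomial.degree_zero, h0]
      exact_mod_cast WithBot.bot_lt_coe 0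
    · have hnat : Q.natDegree ≤ N - 1 := by
        rw [hQ]
        refine natDegree_sum_le_of_forall_le _ _ fun j _ => ?_
        refine natDegree_sum_le_of_forall_le _ _ fun k hk => ?_
        rw [Finset.mem_range] at hk
        refine le_trans (natDegree_C_mul_le _ _) ?_
        refine le_trans (natDegree_mul_le) ?_
        have hP1 : (∏ i, (ascPochhammer ℝ k).comp
            (Polynomial.X + Polynomial.C (a i))).natDegree ≤ r * k := by
          refine le_trans (Polynomial.natDegree_prod_le _ _) ?_
          have : ∀ i : Fin r, ((ascPochhammer ℝ k).comp
              (Polynomial.X + Polynomial.C (a i))).natDegree ≤ k := by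
            intro i
            refine le_trans Polynomial.natDegree_comp_le ?_
            rw [ascPochhammer_natDegree, natDegree_X_add_C, mul_one]
          calc ∑ i, ((ascPochhammer ℝ k).comp
              (Polynomial.X + Polynomial.C (a i))).natDegree
              ≤ ∑ _i : Fin r, k := Finset.sum_le_sum fun i _ => this i
            _ = r * k := by simp [Finset.sum_const, mul_comm]
        have hP2 : (∏ i, (ascPochhammer ℝ (n i - (k + if i = j then 1 else 0))).comp
            (Polynomial.X + Polynomial.C ((k : ℝ) + b i + if i = j then 1 else 0))).natDegree
            ≤ ∑ i, (n i - (k + if i = j then 1 else 0)) := by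
          refine le_trans (Polynomial.natDegree_prod_le _ _) ?_
          refine Finset.sum_le_sum fun i _ => ?_
          refine le_trans Polynomial.natDegree_comp_le ?_
          rw [ascPochhammer_natDegree, natDegree_X_add_C, mul_one]
        have hsum : ∑ i : Fin r, (k + if i = j then 1 else 0) = r * k + 1 := by
          rw [Finset.sum_add_distrib, Finset.sum_const]
          simp [Finset.sum_ite_eq', mul_comm]
        have hsub : ∑ i, (n i - (k + if i = j then 1 else 0))
            = N - (r * k + 1) := by
          rw [hN, ← hsum]
          exact Finset.sum_tsub_distrib _ fun i _ => hδ j k hk i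
        have hle : r * k + 1 ≤ N := by
          rw [hN, ← hsum]
          exact Finset.sum_le_sum fun i _ => hδ j k hk i
        calc (∏ i, (ascPochhammer ℝ k).comp
              (Polynomial.X + Polynomial.C (a i))).natDegree
              + (∏ i, (ascPochhammer ℝ (n i - (k + if i = j then 1 else 0))).comp
                (Polynomial.X + Polynomial.C ((k : ℝ) + b i
                  + if i = j then 1 else 0))).natDegree
            ≤ r * k + ∑ i, (n i - (k + if i = j then 1 else 0)) := add_le_add hP1 hP2
          _ ≤ N - 1 := by rw [hsub]; omega
      calc Q.degree ≤ (Q.natDegree : WithBot ℕ) := Polynomial.degree_le_natDegree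
        _ ≤ ((N - 1 : ℕ) : WithBot ℕ) := by exact_mod_cast hnat
        _ < (N : WithBot ℕ) := by
            rw [Nat.cast_lt]
            omega
  -- Conclusion
  obtain ⟨c, hc⟩ := aux_factor N Q hQdeg hQroot
  refine ⟨c, fun s hs => ?_⟩
  rw [key s hs.le, ← hGQ s hs.le, hc s]
  ring
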